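/- Let k ≥ 2 and let E ∈ T_2(F_q) be the matrix with zero diagonal and (1,2) entry equal to 1. If there exist matrices A, B ∈ T_2(F_q) with A^k + B^k = E, then −1 is a k-th power in F_q (i.e., there exists x ∈ F_q with x^k = −1). -/

import Mathlib

lemma aux_pow_entries {F : Type*} [Field F] (A : Matrix (Fin 2) (Fin 2) F)
    (h : A 1 0 = 0) (k : ℕ) :
    (A ^ k) 0 0 = (A 0 0) ^ k ∧ (A ^ k) 1 1 = (A 1 1) ^ k ∧ (A ^ k) 1 0 = 0 := by
  induction k with
  | zero => simp [Matrix.one_apply]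
  | succ n ih =>
    obtain ⟨h00, h11, h10⟩ := ih
    refine ⟨?_, ?_, ?_⟩ <;>
      simp [pow_succ, Matrix.mul_apply, Fin.sum_univ_two, h00, h11, h10, h]

lemma aux_sq_zero {F : Type*} [Field F] (A : Matrix (Fin 2) (Fin 2) F)
    (h10 : A 1 0 = 0) (h00 : A 0 0 = 0) (h11 : A 1 1 = 0) (k : ℕ) (hk : 2 ≤ k) :
    A ^ k = 0 := by
  have hsq : A ^ 2 = 0 := by
    ext i j
    fin_cases i <;> fin_cases j <;>
      simp [pow_two, Matrix.mul_apply, Fin.sum_univ_two, h10, h00, h11]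
  obtain ⟨m, rfl⟩ := Nat.exists_eq_add_of_le hk
  rw [pow_add, hsq, zero_mul]

/-- If the matrix `[[0,1],[0,0]]` is a sum of two `k`-th powers of upper triangular
matrices, then `-1` is a `k`-th power in `F_q`. -/
theorem stmt_4 (k : ℕ) (hk : 2 ≤ k) (F : Type*) [Field F] [Fintype F]
    (A B : Matrix (Fin 2) (Fin 2) F)
    (hA : A.BlockTriangular id) (hB : B.BlockTriangular id)
    (h : A ^ k + B ^ k = !![(0 : F), 1; 0, 0]) :
    ∃ x : F, x ^ k = -1 := by
  have hA10 : A 1 0 = 0 := hA (by norm_num)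
  have hB10 : B 1 0 = 0 := hB (by norm_num)
  obtain ⟨hA00, hA11, _⟩ := aux_pow_entries A hA10 k
  obtain ⟨hB00, hB11, _⟩ := aux_pow_entries B hB10 k
  have h00 : (A 0 0) ^ k + (B 0 0) ^ k = 0 := by
    have := congrFun (congrFun h 0) 0
    simp [Matrix.add_apply, hA00, hB00] at this
    simpa using this
  have h11 : (A 1 1) ^ k + (B 1 1) ^ k = 0 := by
    have := congrFun (congrFun h 1) 1
    simp [Matrix.add_apply, hA11, hB11] at this
    simpa using this
  by_cases ha : A 0 0 = 0
  · by_cases hb : A 1 1 = 0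
    · -- then B 0 0 ^ k = 0 and B 1 1 ^ k = 0, so B diag zero too
      have hb0 : B 0 0 = 0 := by
        have : (B 0 0) ^ k = 0 := by rw [ha] at h00; simpa [zero_pow (by omega : k ≠ 0)] using h00
        exact pow_eq_zero_iff (by omega : k ≠ 0) |>.mp this
      have hb1 : B 1 1 = 0 := by
        have : (B 1 1) ^ k = 0 := by rw [hb] at h11; simpa [zero_pow (by omega : k ≠ 0)] using h11
        exact pow_eq_zero_iff (by omega : k ≠ 0) |>.mp this
      have hAz := aux_sq_zero A hA10 ha hb k hk
      have hBz := aux_sq_zero B hB10 hb0 hb1 k hk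
      rw [hAz, hBz, add_zero] at h
      have := congrFun (congrFun h.symm 0) 1
      simp at this
    · exact ⟨B 1 1 / A 1 1, by
        rw [div_pow, div_eq_iff (pow_ne_zero _ hb)]
        linear_combination h11⟩
  · exact ⟨B 0 0 / A 0 0, by
      rw [div_pow, div_eq_iff (pow_ne_zero _ ha)]
      linear_combination h00⟩
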